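/- Let n ≥ 1, let T ∈ ℂ, and let ρ > 0 with |T|·ρ^{n+1} < 1. Then (2πi)^{−n} ∯_{|z_j|=ρ} 1 / (∏_{j=1}^{n} z_j · ∏_{j=1}^{n} (1 − T·z_j·∏_{k=1}^{n} z_k)) dz = 1. -/

import Mathlib

open Complex MeasureTheory

section Aux
open Set Real

variable {ι : Type*} [Fintype ι]

lemma aux_denom_ne_zero {m : ℕ} {ρ : ℝ} (hρ : 0 < ρ) (c : ι → ℂ) (e : ι → Fin m → ℕ)
    (hc : ∀ l, ‖c l‖ * ρ ^ (∑ j, e l j) < 1)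
    (w : Fin m → ℂ) (hw : ∀ j, ‖w j‖ = ρ) :
    ((∏ j, w j) * ∏ l, (1 - c l * ∏ j, w j ^ e l j)) ≠ 0 := by
  apply mul_ne_zero
  · exact Finset.prod_ne_zero_iff.2 fun j _ => by
      intro h0
      have := hw j
      rw [h0] at this
      simp only [norm_zero] at this
      exact hρ.ne this
  · refine Finset.prod_ne_zero_iff.2 fun l _ => sub_ne_zero.2 fun h1 => ?_
    have : ‖c l * ∏ j, w j ^ e l j‖ = ‖c l‖ * ρ ^ (∑ j, e l j) := by
      rw [norm_mul, norm_prod]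
      congr 1
      simp only [norm_pow, hw]
      exact Finset.prod_pow_eq_pow_sum _ _ _
    have h2 := hc l
    rw [← this, ← h1] at h2
    simp at h2

lemma aux_integrable {m : ℕ} {ρ : ℝ} (hρ : 0 < ρ) (c : ι → ℂ) (e : ι → Fin m → ℕ)
    (hc : ∀ l, ‖c l‖ * ρ ^ (∑ j, e l j) < 1) :
    TorusIntegrable (fun w => ((∏ j, w j) * ∏ l, (1 - c l * ∏ j, w j ^ e l j))⁻¹)
      (0 : Fin m → ℂ) (fun _ => ρ) := by
  have habs : ∀ (θ : Fin m → ℝ) j, ‖torusMap 0 (fun _ => ρ) θ j‖ = ρ := by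
    intro θ j
    simp [torusMap, norm_exp_ofReal_mul_I, abs_of_pos hρ]
  have hcont : Continuous fun θ : Fin m → ℝ =>
      ((∏ j, torusMap 0 (fun _ => ρ) θ j) *
        ∏ l, (1 - c l * ∏ j, torusMap 0 (fun _ => ρ) θ j ^ e l j))⁻¹ := by
    apply Continuous.inv₀
    · unfold torusMap; fun_prop
    · intro θ; exact aux_denom_ne_zero hρ c e hc _ (habs θ)
  exact hcont.integrableOn_Icc

lemma key_torus {ι : Type*} [Fintype ι] {ρ : ℝ} (hρ : 0 < ρ) :
    ∀ (m : ℕ) (c : ι → ℂ) (e : ι → Fin m → ℕ),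
      (∀ l, ‖c l‖ * ρ ^ (∑ j, e l j) < 1) →
      (∯ w in T((0 : Fin m → ℂ), fun _ => ρ),
          ((∏ j, w j) * ∏ l, (1 - c l * ∏ j, w j ^ e l j))⁻¹)
        = (2 * (Real.pi : ℂ) * Complex.I) ^ m *
            (∏ l, (1 - c l * ∏ j, (0 : ℂ) ^ e l j))⁻¹ := by
  intro m
  induction m with
  | zero =>
    intro c e hc
    rw [torusIntegral_dim0]
    simp
  | succ m ih =>
    intro c e hc
    set d : ι → ℂ := fun l => c l * ∏ j, (0 : ℂ) ^ e l (Fin.succ j) with hd_def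
    have hd : ∀ l, ‖d l‖ * ρ ^ e l 0 < 1 := by
      intro l
      by_cases hz : ∀ j, e l (Fin.succ j) = 0
      · have h1 : (∏ j, (0 : ℂ) ^ e l (Fin.succ j)) = 1 := by
          apply Finset.prod_eq_one
          intro j _
          rw [hz j, pow_zero]
        have h2 : ∑ j, e l j = e l 0 := by
          rw [Fin.sum_univ_succ]
          simp [hz]
        simpa [hd_def, h1, h2] using hc l
      · push_neg at hz
        obtain ⟨j, hj⟩ := hz
        have h1 : (∏ j, (0 : ℂ) ^ e l (Fin.succ j)) = 0 :=
          Finset.prod_eq_zero (Finset.mem_univ j) (zero_pow hj)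
        simp [hd_def, h1]
    rw [torusIntegral_succ (aux_integrable hρ c e hc)]
    rw [show (0 : Fin (m + 1) → ℂ) ∘ Fin.succ = (0 : Fin m → ℂ) from rfl]
    rw [show ((fun _ : Fin (m + 1) => ρ) ∘ Fin.succ) = (fun _ : Fin m => ρ) from rfl]
    have hcirc : (∮ x in C((0 : Fin (m + 1) → ℂ) 0, (fun _ : Fin (m+1) => ρ) 0),
        ∯ y in T((0 : Fin m → ℂ), fun _ => ρ),
          ((∏ j, Fin.cons x y j) * ∏ l, (1 - c l * ∏ j, Fin.cons x y j ^ e l j))⁻¹)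
        = ∮ x in C((0 : ℂ), ρ), (x - 0)⁻¹ •
            ((2 * (Real.pi : ℂ) * Complex.I) ^ m *
              (∏ l, (1 - d l * x ^ e l 0))⁻¹) := by
      show (∮ x in C((0 : ℂ), ρ), _) = _
      apply circleIntegral.integral_congr hρ.le
      intro x hx
      have hxabs : ‖x‖ = ρ := by
        simpa using (mem_sphere_zero_iff_norm.1 hx)
      have hbody : ∀ y : Fin m → ℂ,
          ((∏ j, Fin.cons x y j) * ∏ l, (1 - c l * ∏ j, Fin.cons x y j ^ e l j))⁻¹
          = x⁻¹ * ((∏ j, y j) *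
              ∏ l, (1 - (c l * x ^ e l 0) * ∏ j, y j ^ e l (Fin.succ j)))⁻¹ := by
        intro y
        simp only [Fin.prod_univ_succ, Fin.cons_zero, Fin.cons_succ, mul_inv, mul_assoc]
      simp only [hbody]
      rw [torusIntegral_const_mul]
      have hcond : ∀ l, ‖c l * x ^ e l 0‖ *
          ρ ^ (∑ j, e l (Fin.succ j)) < 1 := by
        intro l
        rw [norm_mul, norm_pow, hxabs, mul_assoc, ← pow_add, ← Fin.sum_univ_succ]
        exact hc l
      rw [ih (fun l => c l * x ^ e l 0) (fun l j => e l (Fin.succ j)) hcond]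
      have hfac : ∀ l : ι, (1 - (c l * x ^ e l 0) * ∏ j, (0 : ℂ) ^ e l (Fin.succ j))
          = 1 - d l * x ^ e l 0 := by
        intro l
        rw [hd_def]
        ring
      simp only [hfac, sub_zero, smul_eq_mul]
    rw [hcirc]
    have hdiff : DifferentiableOn ℂ
        (fun z : ℂ => (2 * (Real.pi : ℂ) * Complex.I) ^ m *
          (∏ l, (1 - d l * z ^ e l 0))⁻¹) (Metric.closedBall 0 ρ) := by
      apply DifferentiableOn.const_mul
      apply DifferentiableOn.inv
      · apply Differentiable.differentiableOn
        apply Differentiable.fun_finset_prod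
        intro l _
        apply Differentiable.const_sub
        exact (differentiable_pow _).const_mul _
      · intro z hz
        refine Finset.prod_ne_zero_iff.2 fun l _ => sub_ne_zero.2 fun h1 => ?_
        have hzρ : ‖z‖ ≤ ρ := by
          simpa using mem_closedBall_zero_iff.1 hz
        have : ‖d l * z ^ e l 0‖ ≤ ‖d l‖ * ρ ^ e l 0 := by
          rw [norm_mul, norm_pow]
          exact mul_le_mul_of_nonneg_left
            (pow_le_pow_left₀ (norm_nonneg _) hzρ _) (norm_nonneg _)
        rw [← h1] at this
        simp at this
        exact absurd (lt_of_le_of_lt this (hd l)) (lt_irrefl 1)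
    rw [hdiff.circleIntegral_sub_inv_smul (Metric.mem_ball_self hρ)]
    have hprod : ∀ l : ι, (1 - c l * ∏ j, (0 : ℂ) ^ e l j)
        = 1 - d l * (0 : ℂ) ^ e l 0 := by
      intro l
      rw [hd_def, Fin.prod_univ_succ]
      ring
    simp only [hprod, smul_eq_mul]
    ring

end Aux
/-- (Analytic core of Lemma `lm:G_residues_x` of the paper.)
For `n ≥ 1`, `T ∈ ℂ` and `ρ > 0` with `|T|·ρ^{n+1} < 1`,
`(2πi)^{−n} ∯_{|z_j|=ρ} 1 / (∏ z_j · ∏ (1 − T z_j ∏ z_k)) dz = 1`. -/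
theorem torus_integral_one (n : ℕ) (hn : 1 ≤ n) (T : ℂ) (ρ : ℝ) (hρ : 0 < ρ)
    (h : ‖T‖ * ρ ^ (n + 1) < 1) :
    (2 * (Real.pi : ℂ) * Complex.I)⁻¹ ^ n *
      (∯ z in T((0 : Fin n → ℂ), fun _ => ρ),
        1 / ((∏ j, z j) * ∏ j, (1 - T * z j * ∏ k, z k))) = 1 := by
  set e : Fin n → Fin n → ℕ := fun l k => 1 + if k = l then 1 else 0 with he_def
  have hsum : ∀ l, (∑ k, e l k) = n + 1 := by
    intro l
    simp [he_def, Finset.sum_add_distrib, Finset.sum_ite_eq']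
  have hc : ∀ l : Fin n, ‖T‖ * ρ ^ (∑ k, e l k) < 1 := by
    intro l; rw [hsum l]; exact h
  have hbody : ∀ z : Fin n → ℂ,
      1 / ((∏ j, z j) * ∏ j, (1 - T * z j * ∏ k, z k))
      = ((∏ j, z j) * ∏ l, (1 - T * ∏ k, z k ^ e l k))⁻¹ := by
    intro z
    rw [one_div]
    congr 2
    apply Finset.prod_congr rfl
    intro l _
    have : (∏ k, z k ^ e l k) = (∏ k, z k) * z l := by
      have h1 : ∀ k : Fin n, z k ^ e l k = z k * if k = l then z k else 1 := by
        intro k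
        rw [he_def, pow_add, pow_one]
        split_ifs <;> simp
      simp only [h1]
      rw [Finset.prod_mul_distrib, Finset.prod_ite_eq' Finset.univ l (fun k => z k)]
      simp
    rw [this]
    ring
  simp only [hbody]
  rw [key_torus hρ n (fun _ => T) e hc]
  have hz : ∀ l : Fin n, (∏ k, (0 : ℂ) ^ e l k) = 0 := by
    intro l
    exact Finset.prod_eq_zero (Finset.mem_univ l) (by simp [he_def])
  simp only [hz, mul_zero, sub_zero, Finset.prod_const_one, inv_one, mul_one]
  rw [inv_pow, inv_mul_cancel₀]
  apply pow_ne_zero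
  simp [Real.pi_ne_zero, Complex.I_ne_zero]
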